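/- For integers n ≥ 2, k with 2 ≤ k ≤ n-1, and m ≥ 1, the coefficient of t^m in the Ehrhart polynomial of the uniform matroid U_{2,n} is (1/(n-1)!)·(2^m·[n, m+1] − n·[n-1, m]), where [n,k] is the unsigned Stirling number of the first kind. Equivalently, ∑_{i=0}^{1}(-1)^i C(n,i) C((2-i)t - i + n - 1, n-1) = (1/(n-1)!)·∑_{m≥0}(2^m [n,m+1] − n[n-1,m]) t^m as polynomials in t. -/

import Mathlib

open Equiv Equiv.Perm Finset

section PStat
variable {β : Type*} [DecidableEq β] [Fintype β]

/-- total cycle count statistic -/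
def pstat (σ : Perm β) : ℕ :=
  (Fintype.card β - σ.cycleType.sum) + Multiset.card σ.cycleType

def scSetoid (σ : Perm β) : Setoid β :=
  ⟨σ.SameCycle, ⟨SameCycle.refl σ, SameCycle.symm, SameCycle.trans⟩⟩

theorem pstat_eq_card_quot (σ : Perm β) :
    pstat σ = Nat.card (Quotient (scSetoid σ)) := by
  classical
  set f : β → ({x : β // σ x = x} ⊕ {c : Perm β // c ∈ σ.cycleFactorsFinset}) :=
    fun x => if h : σ x = x then Sum.inl ⟨x, h⟩
      else Sum.inr ⟨σ.cycleOf x, cycleOf_mem_cycleFactorsFinset_iff.mpr (mem_support.mpr h)⟩ with hf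
  have hwd : ∀ x y : β, σ.SameCycle x y → f x = f y := by
    intro x y hxy
    by_cases hx : σ x = x
    · have : y = x := by
        obtain ⟨i, hi⟩ := hxy
        rw [← hi, zpow_apply_eq_self_of_apply_eq_self hx]
      subst this
      rfl
    · have hy : ¬ σ y = y := by
        intro hy
        obtain ⟨i, hi⟩ := hxy.symm
        rw [zpow_apply_eq_self_of_apply_eq_self hy] at hi
        exact hx (hi ▸ hy)
      rw [hf]
      simp only [dif_neg hx, dif_neg hy]
      congr 1
      exact Subtype.ext hxy.cycleOf_eq
  have hbij : Function.Bijective (Quotient.lift f hwd :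
      Quotient (scSetoid σ) → ({x : β // σ x = x} ⊕ {c : Perm β // c ∈ σ.cycleFactorsFinset})) := by
    constructor
    · intro a b
      refine Quotient.inductionOn₂ a b fun x y h => Quotient.sound ?_
      change f x = f y at h
      rw [hf] at h
      simp only at h
      split_ifs at h with hx hy hy <;>
        simp only [Sum.inl.injEq, Sum.inr.injEq, Subtype.mk.injEq, reduceCtorEq] at h
      · subst h; exact SameCycle.refl σ _
      · have : y ∈ (σ.cycleOf x).support := by
          rw [h, mem_support_cycleOf_iff]
          exact ⟨SameCycle.refl σ y, mem_support.mpr hy⟩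
        exact (mem_support_cycleOf_iff.mp this).1
    · rintro (⟨x, hx⟩ | ⟨c, hc⟩)
      · exact ⟨⟦x⟧, by show f x = _; rw [hf]; simp [dif_pos hx]⟩
      · have hcyc := (mem_cycleFactorsFinset_iff.mp hc).1
        obtain ⟨a, ha⟩ := hcyc.nonempty_support
        have hsa : σ a ≠ a := by
          rw [← (mem_cycleFactorsFinset_iff.mp hc).2 a ha]
          exact mem_support.mp ha
        refine ⟨⟦a⟧, ?_⟩
        show f a = _
        rw [hf]
        simp only [dif_neg hsa]
        congr 1
        exact Subtype.ext (cycle_is_cycleOf ha hc).symm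
  rw [Nat.card_congr (Equiv.ofBijective _ hbij), Nat.card_sum]
  have h1 : Nat.card {x : β // σ x = x} = Fintype.card β - σ.cycleType.sum := by
    rw [Nat.card_eq_fintype_card, ← Equiv.Perm.card_fixedPoints σ]
    exact Fintype.card_congr (Equiv.subtypeEquivRight (by
      intro x; simp [Function.IsFixedPt, Function.fixedPoints, Set.mem_setOf_eq]))
  have h2 : Nat.card {c : Perm β // c ∈ σ.cycleFactorsFinset} = Multiset.card σ.cycleType := by
    rw [Nat.card_eq_fintype_card, Fintype.card_coe, cycleType_def, Multiset.card_map]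
    rfl
  rw [h1, h2, pstat]


end PStat

section OptionPart
variable {α : Type*} [DecidableEq α] [Fintype α]

def optionCongrHom (α : Type*) : Perm α →* Perm (Option α) where
  toFun := Equiv.optionCongr
  map_one' := Equiv.optionCongr_one
  map_mul' := fun e f => by ext x; cases x <;> simp

theorem optionCongr_zpow (e : Perm α) (i : ℤ) :
    (Equiv.optionCongr e) ^ i = Equiv.optionCongr (e ^ i) :=
  (map_zpow (optionCongrHom α) e i).symm

theorem card_quot_optionCongr (e : Perm α) :
    Nat.card (Quotient (scSetoid (Equiv.optionCongr e)))
      = Nat.card (Quotient (scSetoid e)) + 1 := by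
  classical
  have wd : ∀ x y : α, (scSetoid e).r x y →
      (⟦some x⟧ : Quotient (scSetoid (Equiv.optionCongr e))) = ⟦some y⟧ := by
    rintro x y ⟨i, hi⟩
    exact Quotient.sound ⟨i, by rw [optionCongr_zpow]; simp [hi]⟩
  let g : Option (Quotient (scSetoid e)) → Quotient (scSetoid (Equiv.optionCongr e)) :=
    fun o => o.elim ⟦none⟧ (Quotient.lift _ wd)
  have hbij : Function.Bijective g := by
    constructor
    · intro a b h
      match a, b with
      | none, none => rfl
      | none, some q =>
        induction q using Quotient.ind with
        | _ x =>
          obtain ⟨i, hi⟩ := Quotient.exact h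
          rw [optionCongr_zpow] at hi
          simp at hi
      | some q, none =>
        induction q using Quotient.ind with
        | _ x =>
          obtain ⟨i, hi⟩ := Quotient.exact h
          rw [optionCongr_zpow] at hi
          simp at hi
      | some q, some q' =>
        induction q using Quotient.ind with
        | _ x =>
        induction q' using Quotient.ind with
        | _ y =>
          obtain ⟨i, hi⟩ := Quotient.exact h
          rw [optionCongr_zpow] at hi
          simp only [optionCongr_apply, Option.map_some, Option.some.injEq] at hi
          exact congrArg (fun q => some q) (Quotient.sound ⟨i, hi⟩)
    · intro z
      induction z using Quotient.ind with
      | _ o =>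
        cases o with
        | none => exact ⟨none, rfl⟩
        | some x => exact ⟨some ⟦x⟧, rfl⟩
  rw [← Nat.card_congr (Equiv.ofBijective g hbij), Finite.card_option]

theorem card_quot_insert (b : α) (e : Perm α) :
    Nat.card (Quotient (scSetoid (swap none (some b) * Equiv.optionCongr e)))
      = Nat.card (Quotient (scSetoid e)) := by
  classical
  set σ : Perm (Option α) := swap none (some b) * Equiv.optionCongr e with hσ
  have hnone : σ none = some b := by simp [hσ]
  have hsome : ∀ x : α, σ (some x) = if e x = b then none else some (e x) := by
    intro x
    by_cases h : e x = b <;> simp [hσ, h, swap_apply_of_ne_of_ne]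
  -- one step forward
  have step : ∀ x : α, σ.SameCycle (some x) (some (e x)) := by
    intro x
    by_cases h : e x = b
    · refine ⟨2, ?_⟩
      have h1 : σ (some x) = none := by rw [hsome]; simp [h]
      calc (σ ^ (2:ℤ)) (some x) = σ (σ (some x)) := by
            rw [zpow_two]; rfl
        _ = some (e x) := by rw [h1, hnone, h]
    · exact ⟨1, by rw [zpow_one, hsome]; simp [h]⟩
  have fwd : ∀ (n : ℕ) (x : α), σ.SameCycle (some x) (some ((e ^ n) x)) := by
    intro n
    induction n with
    | zero => intro x; simpa using SameCycle.refl σ (some x)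
    | succ n ih =>
      intro x
      have h2 := (step x).trans (ih (e x))
      rw [← Perm.mul_apply, ← pow_succ] at h2
      exact h2
  -- retraction
  let r : Option α → α := fun z => z.elim b id
  have rstep : ∀ z : Option α, e.SameCycle (r z) (r (σ z)) := by
    intro z
    cases z with
    | none => rw [hnone]; exact SameCycle.refl _ _
    | some x =>
      rw [hsome]
      by_cases h : e x = b
      · simp only [h, if_pos]
        exact ⟨1, by simp [r, h]⟩
      · simp only [h, if_neg, not_false_iff]
        exact ⟨1, by simp [r]⟩
  have bwd : ∀ (n : ℕ) (z : Option α), e.SameCycle (r z) (r ((σ ^ n) z)) := by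
    intro n
    induction n with
    | zero => intro z; simpa using SameCycle.refl e (r z)
    | succ n ih =>
      intro z
      have h2 := (rstep z).trans (ih (σ z))
      rw [← Perm.mul_apply, ← pow_succ] at h2
      exact h2
  have wd : ∀ x y : α, (scSetoid e).r x y →
      (⟦some x⟧ : Quotient (scSetoid σ)) = ⟦some y⟧ := by
    intro x y hxy
    obtain ⟨i, hlt, hi⟩ := SameCycle.exists_pow_eq' hxy
    exact Quotient.sound (by rw [← hi]; exact fwd i x)
  let g : Quotient (scSetoid e) → Quotient (scSetoid σ) := Quotient.lift _ wd
  have hbij : Function.Bijective g := by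
    constructor
    · intro a b'
      refine Quotient.inductionOn₂ a b' fun x y h => Quotient.sound ?_
      have hxy : σ.SameCycle (some x) (some y) := Quotient.exact h
      obtain ⟨i, hlt, hi⟩ := SameCycle.exists_pow_eq' hxy
      have := bwd i (some x)
      rw [hi] at this
      exact this
    · intro z
      induction z using Quotient.ind with
      | _ o =>
        cases o with
        | none =>
          refine ⟨⟦b⟧, ?_⟩
          refine (Quotient.sound ?_ : (⟦some b⟧ : Quotient (scSetoid σ)) = ⟦none⟧)
          exact SameCycle.symm (⟨1, by rw [zpow_one]; exact hnone⟩ : σ.SameCycle none (some b))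
        | some x => exact ⟨⟦x⟧, rfl⟩
  exact (Nat.card_congr (Equiv.ofBijective g hbij)).symm


end OptionPart


theorem cycleType_permCongr {β γ : Type*} [DecidableEq β] [Fintype β] [DecidableEq γ] [Fintype γ]
    (f : β ≃ γ) (σ : Perm β) : cycleType (f.permCongr σ) = cycleType σ := by
  classical
  have h : f.permCongr σ
      = σ.extendDomain (f.trans (Equiv.subtypeUnivEquiv (fun _ : γ => trivial)).symm) := by
    ext x
    rw [Perm.extendDomain_apply_subtype _ _ (trivial : (fun _ : γ => True) x)]
    simp [Equiv.permCongr_apply]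
  rw [h, cycleType_extendDomain]


section Count
variable {α : Type*} [DecidableEq α] [Fintype α]


theorem pstat_permCongr {β γ : Type*} [DecidableEq β] [Fintype β] [DecidableEq γ] [Fintype γ]
    (f : β ≃ γ) (σ : Perm β) : pstat (f.permCongr σ) = pstat σ := by
  rw [pstat, pstat, cycleType_permCongr, Fintype.card_congr f.symm]

theorem pstat_decompose (i : Option α) (e : Perm α) :
    pstat (Equiv.Perm.decomposeOption.symm (i, e))
      = pstat e + (if i = none then 1 else 0) := by
  have hd : Equiv.Perm.decomposeOption.symm (i, e) = swap none i * Equiv.optionCongr e := rfl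
  cases i with
  | none =>
    rw [hd, swap_self, if_pos rfl]
    rw [show (Equiv.refl (Option α) : Perm (Option α)) * Equiv.optionCongr e
        = Equiv.optionCongr e from one_mul _]
    rw [pstat_eq_card_quot, pstat_eq_card_quot, card_quot_optionCongr]
  | some b =>
    rw [hd, if_neg (by simp)]
    rw [pstat_eq_card_quot, pstat_eq_card_quot (σ := e), card_quot_insert, Nat.add_zero]

theorem count_pstat_option (k : ℕ) :
    (univ.filter (fun σ : Perm (Option α) => pstat σ = k + 1)).card
      = (univ.filter (fun e : Perm α => pstat e = k)).card
        + (Fintype.card α) * (univ.filter (fun e : Perm α => pstat e = k + 1)).card := by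
  classical
  rw [Finset.univ_perm_option, Finset.filter_map, Finset.card_map]
  have : ∀ x : Option α × Perm α,
      (pstat (Equiv.Perm.decomposeOption.symm x) = k + 1)
        ↔ (if x.1 = none then pstat x.2 = k else pstat x.2 = k + 1) := by
    rintro ⟨i, e⟩
    rw [pstat_decompose]
    by_cases h : i = none <;> simp [h]
  rw [show ((univ : Finset (Option α × Perm α)).filter
        ((fun σ => pstat σ = k + 1) ∘ Equiv.Perm.decomposeOption.symm.toEmbedding))
      = (univ.filter (fun x : Option α × Perm α =>
          if x.1 = none then pstat x.2 = k else pstat x.2 = k + 1)) from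
    Finset.filter_congr (fun x _ => by simpa using this x)]
  rw [Finset.card_filter]
  rw [← Finset.univ_product_univ, Finset.sum_product]
  rw [Fintype.sum_option]
  have h3 : ∀ b : α, (∑ e : Perm α,
        if (if (some b : Option α) = none then pstat e = k else pstat e = k + 1) then 1 else 0)
      = (univ.filter (fun e : Perm α => pstat e = k + 1)).card := by
    intro b
    simp only [reduceCtorEq, if_false, Finset.card_filter]
  simp only [if_pos rfl, if_true]
  rw [show (∑ x : Perm α, if pstat x = k then 1 else 0)
      = (univ.filter (fun e : Perm α => pstat e = k)).card from (Finset.card_filter _ _).symm,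
    Finset.sum_congr rfl (fun b _ => h3 b), Finset.sum_const, Finset.card_univ, smul_eq_mul]


end Count


/-- Unsigned Stirling number of the first kind: the number of permutations of an
n-element set with exactly k cycles (counting fixed points as cycles). -/
noncomputable def stirling (n k : ℕ) : ℕ :=
  Nat.card {σ : Equiv.Perm (Fin n) // (n - σ.cycleType.sum) + σ.cycleType.card = k}


theorem stirling_eq_filter_card (n k : ℕ) :
    stirling n k = (univ.filter (fun σ : Perm (Fin n) => pstat σ = k)).card := by
  rw [stirling, Nat.card_eq_fintype_card, Fintype.card_subtype]
  congr 1
  ext σ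
  simp [pstat]

theorem stirling_rec (n k : ℕ) :
    stirling (n + 1) (k + 1) = stirling n k + n * stirling n (k + 1) := by
  rw [stirling_eq_filter_card, stirling_eq_filter_card, stirling_eq_filter_card]
  have hE : ∀ k' : ℕ, (univ.filter (fun σ : Perm (Fin (n + 1)) => pstat σ = k')).card
      = (univ.filter (fun σ : Perm (Option (Fin n)) => pstat σ = k')).card := by
    intro k'
    rw [← Fintype.card_subtype, ← Fintype.card_subtype]
    exact Fintype.card_congr (Equiv.subtypeEquiv ((finSuccEquiv n).permCongr)
      (fun σ => by rw [pstat_permCongr]))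
  rw [hE, count_pstat_option, Fintype.card_fin]

theorem stirling_zero_right {n : ℕ} (hn : 1 ≤ n) : stirling n 0 = 0 := by
  rw [stirling_eq_filter_card, Finset.card_eq_zero, Finset.filter_eq_empty_iff]
  intro σ _
  intro h0
  have hc : Multiset.card σ.cycleType = 0 := Nat.eq_zero_of_add_eq_zero_left h0
  have hσ : σ = 1 := card_cycleType_eq_zero.mp hc
  rw [hσ, pstat, cycleType_one] at h0
  simp at h0
  omega

theorem stirling_eq_zero_of_lt {n k : ℕ} (h : n < k) : stirling n k = 0 := by
  rw [stirling_eq_filter_card, Finset.card_eq_zero, Finset.filter_eq_empty_iff]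
  intro σ _
  intro h0
  have h1 : σ.cycleType.sum ≤ n := by
    rw [sum_cycleType]
    simpa using Finset.card_le_univ σ.support
  have h2 : Multiset.card σ.cycleType ≤ σ.cycleType.sum := by
    have := Multiset.card_nsmul_le_sum (s := σ.cycleType) (a := 1)
      (fun x hx => one_le_two.trans (two_le_of_mem_cycleType hx))
    simpa using this
  rw [pstat, Fintype.card_fin] at h0
  omega

theorem stirling_one_one : stirling 1 1 = 1 := by
  rw [stirling]
  have h : ∀ σ : Perm (Fin 1), (1 - σ.cycleType.sum) + σ.cycleType.card = 1 := by
    intro σ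
    have hσ : σ = 1 := Subsingleton.elim _ _
    simp [hσ]
  rw [Nat.card_eq_fintype_card, Fintype.card_subtype]
  rw [Finset.filter_true_of_mem (fun σ _ => h σ), Finset.card_univ]
  simp [Fintype.card_perm]

theorem stirling_poly (n : ℕ) (x : ℚ) :
    ∑ m ∈ range (n + 1), (stirling (n + 1) (m + 1) : ℚ) * x ^ m
      = ∏ j ∈ range n, (x + 1 + j) := by
  induction n generalizing x with
  | zero => simp [stirling_one_one]
  | succ n ih =>
    have hrec : ∀ m : ℕ, (stirling (n + 2) (m + 1) : ℚ)
        = stirling (n + 1) m + (n + 1) * stirling (n + 1) (m + 1) := by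
      intro m
      rw [show n + 2 = (n + 1) + 1 from rfl, stirling_rec]
      push_cast
      ring
    calc ∑ m ∈ range (n + 2), (stirling (n + 2) (m + 1) : ℚ) * x ^ m
        = ∑ m ∈ range (n + 2), ((stirling (n + 1) m : ℚ) * x ^ m
            + (n + 1) * ((stirling (n + 1) (m + 1) : ℚ) * x ^ m)) := by
          refine Finset.sum_congr rfl fun m _ => ?_
          rw [hrec m]; ring
      _ = (∑ m ∈ range (n + 2), (stirling (n + 1) m : ℚ) * x ^ m)
            + (n + 1) * ∑ m ∈ range (n + 2), (stirling (n + 1) (m + 1) : ℚ) * x ^ m := by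
          rw [Finset.sum_add_distrib, Finset.mul_sum]
      _ = x * (∑ m ∈ range (n + 1), (stirling (n + 1) (m + 1) : ℚ) * x ^ m)
            + (n + 1) * ∑ m ∈ range (n + 1), (stirling (n + 1) (m + 1) : ℚ) * x ^ m := by
          congr 1
          · rw [Finset.sum_range_succ', Finset.mul_sum]
            rw [stirling_zero_right (by omega)]
            simp only [Nat.cast_zero, zero_mul, pow_zero, mul_one, add_zero]
            refine Finset.sum_congr rfl fun m _ => ?_
            ring
          · rw [Finset.sum_range_succ, stirling_eq_zero_of_lt (by omega)]
            simp
      _ = ∏ j ∈ range (n + 1), (x + 1 + j) := by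
          rw [ih, Finset.prod_range_succ]
          push_cast
          ring



theorem ascFactorial_prod (n k : ℕ) : n.ascFactorial k = ∏ i ∈ range k, (n + i) := by
  induction k with
  | zero => simp
  | succ k ih => rw [Nat.ascFactorial_succ, Finset.prod_range_succ, ih, mul_comm]

theorem stmt18 (n k : ℕ) (hn : 2 ≤ n) (hk : 2 ≤ k) (hkn : k ≤ n - 1) (t : ℕ) :
    ((2 * t + n - 1).choose (n - 1) : ℚ) - n * ((t + n - 2).choose (n - 1) : ℚ)
      = (1 / (n - 1).factorial) *
          ∑ m ∈ Finset.range n,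
            ((2 : ℚ) ^ m * stirling n (m + 1) - n * stirling (n - 1) m) * (t : ℚ) ^ m := by
  obtain ⟨p, rfl⟩ : ∃ p, n = p + 2 := ⟨n - 2, by omega⟩
  have e1 : 2 * t + (p + 2) - 1 = 2 * t + (p + 1) := by omega
  have e2 : t + (p + 2) - 2 = t + p := by omega
  have e3 : p + 2 - 1 = p + 1 := by omega
  rw [e1, e2, e3]
  have hfac : ((p + 1).factorial : ℚ) ≠ 0 := by
    exact_mod_cast Nat.factorial_ne_zero (p + 1)
  rw [one_div, inv_mul_eq_div, eq_div_iff hfac]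
  -- product forms
  have hA : ((2 * t + (p + 1)).choose (p + 1) : ℚ) * (p + 1).factorial
      = ∏ j ∈ range (p + 1), (2 * (t : ℚ) + 1 + j) := by
    have hN : (p + 1).factorial * (2 * t + (p + 1)).choose (p + 1)
        = ∏ j ∈ range (p + 1), (2 * t + 1 + j) := by
      rw [← Nat.ascFactorial_eq_factorial_mul_choose, ascFactorial_prod]
    calc ((2 * t + (p + 1)).choose (p + 1) : ℚ) * (p + 1).factorial
        = (((p + 1).factorial * (2 * t + (p + 1)).choose (p + 1) : ℕ) : ℚ) := by
          push_cast; ring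
      _ = ∏ j ∈ range (p + 1), (2 * (t : ℚ) + 1 + j) := by
          rw [hN]; push_cast; rfl
  have hB : ((t + p).choose (p + 1) : ℚ) * (p + 1).factorial
      = (t : ℚ) * ∏ j ∈ range p, ((t : ℚ) + 1 + j) := by
    have hN : (p + 1).factorial * (t + p).choose (p + 1)
        = ∏ j ∈ range (p + 1), (t + j) := by
      have := Nat.ascFactorial_eq_factorial_mul_choose' t (p + 1)
      rw [show t + (p + 1) - 1 = t + p from by omega] at this
      rw [← this, ascFactorial_prod]
    have hsplit : (∏ j ∈ range (p + 1), ((t : ℚ) + j))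
        = (t : ℚ) * ∏ j ∈ range p, ((t : ℚ) + 1 + j) := by
      rw [Finset.prod_range_succ']
      simp only [Nat.cast_zero, add_zero]
      rw [mul_comm]
      exact congrArg _ (Finset.prod_congr rfl fun j _ => by push_cast; ring)
    calc ((t + p).choose (p + 1) : ℚ) * (p + 1).factorial
        = (((p + 1).factorial * (t + p).choose (p + 1) : ℕ) : ℚ) := by push_cast; ring
      _ = ∏ j ∈ range (p + 1), ((t : ℚ) + j) := by rw [hN]; push_cast; rfl
      _ = _ := hsplit
  -- sum forms
  have hS1 : ∑ m ∈ range (p + 2), (2 : ℚ) ^ m * (stirling (p + 2) (m + 1) : ℚ) * (t : ℚ) ^ m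
      = ∏ j ∈ range (p + 1), (2 * (t : ℚ) + 1 + j) := by
    have := stirling_poly (p + 1) (2 * (t : ℚ))
    rw [← this]
    refine Finset.sum_congr rfl fun m _ => ?_
    rw [mul_pow]
    ring
  have hS2 : ∑ m ∈ range (p + 2), (stirling (p + 1) m : ℚ) * (t : ℚ) ^ m
      = (t : ℚ) * ∏ j ∈ range p, ((t : ℚ) + 1 + j) := by
    rw [Finset.sum_range_succ', stirling_zero_right (by omega)]
    simp only [Nat.cast_zero, zero_mul, pow_zero, mul_one, add_zero]
    rw [← stirling_poly p (t : ℚ), Finset.mul_sum]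
    refine Finset.sum_congr rfl fun m _ => ?_
    ring
  have hcast : ((p + 2 : ℕ) : ℚ) = (p : ℚ) + 2 := by push_cast; ring
  rw [hcast]
  symm
  calc (∑ m ∈ Finset.range (p + 2),
          ((2 : ℚ) ^ m * stirling (p + 2) (m + 1) - (p + 2) * stirling (p + 1) m) * (t : ℚ) ^ m)
      = (∑ m ∈ range (p + 2), (2 : ℚ) ^ m * (stirling (p + 2) (m + 1) : ℚ) * (t : ℚ) ^ m)
        - (p + 2) * ∑ m ∈ range (p + 2), (stirling (p + 1) m : ℚ) * (t : ℚ) ^ m := by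
        rw [Finset.mul_sum, ← Finset.sum_sub_distrib]
        refine Finset.sum_congr rfl fun m _ => ?_
        push_cast
        ring
    _ = ((2 * t + (p + 1)).choose (p + 1) : ℚ) * (p + 1).factorial
        - (p + 2) * (((t + p).choose (p + 1) : ℚ) * (p + 1).factorial) := by
        rw [hS1, hS2, hA, hB]
    _ = (((2 * t + (p + 1)).choose (p + 1) : ℚ) - (↑p + 2) * ((t + p).choose (p + 1) : ℚ))
          * (p + 1).factorial := by ring
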